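/- Let c > 0 be a real number. For every real x with 0 < x < 2c, the series Σ_{n=1}^{∞} cos(n π x / c) / n converges and its sum equals −ln( 2 · sin(π x / (2c)) ). -/

import Mathlib

open Real Filter in
theorem statement_14 (c : ℝ) (hc : 0 < c) (x : ℝ) (hx : 0 < x) (hx' : x < 2 * c) :
    Tendsto (fun N : ℕ => ∑ n ∈ Finset.Icc 1 N, Real.cos (n * π * x / c) / n)
      atTop (nhds (-Real.log (2 * Real.sin (π * x / (2 * c))))) := by
  open Complex Topology in
  set θ : ℝ := π * x / c with hθdef
  have hπ := Real.pi_pos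
  have hθ0 : 0 < θ := by positivity
  have hθ2 : θ < 2 * π := by
    rw [hθdef, div_lt_iff₀ hc]
    nlinarith
  have hhalf0 : 0 < θ / 2 := by positivity
  have hhalfπ : θ / 2 < π := by linarith
  have hsinpos : 0 < Real.sin (θ / 2) := Real.sin_pos_of_pos_of_lt_pi hhalf0 hhalfπ
  set z : ℂ := Complex.exp (θ * Complex.I) with hzdef
  have hz1 : ‖z‖ = 1 := by
    rw [hzdef]
    exact Complex.norm_exp_ofReal_mul_I θ
  have hre : (1 - z).re = 1 - Real.cos θ := by
    simp [hzdef, Complex.exp_ofReal_mul_I_re]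
  have him : (1 - z).im = -Real.sin θ := by
    simp [hzdef, Complex.exp_ofReal_mul_I_im]
  have hcoslt : Real.cos θ < 1 := by
    have hs := Real.sin_sq_eq_half_sub (θ / 2)
    rw [show 2 * (θ / 2) = θ by ring] at hs
    nlinarith
  have hslit : 1 - z ∈ Complex.slitPlane := by
    rw [Complex.mem_slitPlane_iff]
    left; rw [hre]; linarith
  have hzne : z ≠ 1 := by
    intro h
    rw [h] at hre
    simp at hre
    linarith
  -- abs (1 - z) = 2 sin (θ/2)
  have habs : ‖1 - z‖ = 2 * Real.sin (θ / 2) := by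
    have h1 : (‖1 - z‖) ^ 2 = 2 - 2 * Real.cos θ := by
      rw [Complex.sq_norm, Complex.normSq_apply, hre, him]
      nlinarith [Real.sin_sq_add_cos_sq θ]
    have h2 : (2 * Real.sin (θ / 2)) ^ 2 = 2 - 2 * Real.cos θ := by
      have hs := Real.sin_sq_eq_half_sub (θ / 2)
      rw [show 2 * (θ / 2) = θ by ring] at hs
      nlinarith
    rw [← Real.sqrt_sq (norm_nonneg _), h1, ← h2,
      Real.sqrt_sq (by positivity)]
  -- Step 1: convergence of partial sums of z^n/n
  have hconv : ∃ L, Tendsto (fun n : ℕ ↦ ∑ i ∈ Finset.range n, z ^ i / i) atTop (𝓝 L) := by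
    have hb : ∀ n : ℕ, ‖∑ i ∈ Finset.range n, z ^ (i + 1)‖ ≤ 2 / ‖z - 1‖ := by
      intro n
      have hz1' : z - 1 ≠ 0 := sub_ne_zero.mpr hzne
      have hgs : ∑ i ∈ Finset.range n, z ^ (i + 1) = z * ((z ^ n - 1) / (z - 1)) := by
        rw [← geom_sum_eq hzne, Finset.mul_sum]
        simp [pow_succ, mul_comm]
      rw [hgs]
      have hpos : 0 < ‖z - 1‖ := norm_pos_iff.mpr hz1'
      rw [norm_mul, norm_div, hz1, one_mul, div_le_div_iff₀ hpos hpos]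
      calc ‖z ^ n - 1‖ * ‖z - 1‖ ≤ (‖z ^ n‖ + 1) * ‖z - 1‖ := by
            gcongr; simpa using norm_sub_le (z ^ n) 1
        _ = 2 * ‖z - 1‖ := by rw [norm_pow, hz1]; ring
    have hanti : Antitone (fun n : ℕ ↦ (1 : ℝ) / (n + 1)) := by
      intro a b hab
      apply one_div_le_one_div_of_le (by positivity)
      have : (a : ℝ) ≤ b := Nat.cast_le.mpr hab
      linarith
    have h0 : Tendsto (fun n : ℕ ↦ (1 : ℝ) / (n + 1)) atTop (𝓝 0) :=
      tendsto_one_div_add_atTop_nhds_zero_nat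
    have hcs := hanti.cauchySeq_series_mul_of_tendsto_zero_of_bounded h0 hb
    obtain ⟨L, hL⟩ := cauchySeq_tendsto_of_complete hcs
    refine ⟨L, ?_⟩
    rw [← tendsto_add_atTop_iff_nat 1]
    convert hL using 2 with n
    rw [Finset.sum_range_succ']
    simp only [pow_zero, Nat.cast_zero, div_zero, add_zero]
    congr 1 with i
    rw [Complex.real_smul]
    push_cast
    ring
  obtain ⟨L, hL⟩ := hconv
  -- Step 2: L = -log (1 - z)
  have hLeq : L = -Complex.log (1 - z) := by
    have habel := Complex.tendsto_tsum_powerSeries_nhdsWithin_lt (f := fun n : ℕ ↦ z ^ n / n) hL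
    have h2 : Tendsto (fun w : ℂ ↦ ∑' n : ℕ, z ^ n / n * w ^ n)
        ((𝓝[<] (1:ℝ)).map Complex.ofReal) (𝓝 (-Complex.log (1 - z))) := by
      rw [tendsto_map'_iff]
      have hev : ∀ᶠ (r : ℝ) in 𝓝[<] (1:ℝ),
          -Complex.log (1 - r * z) = ∑' n : ℕ, z ^ n / n * (r:ℂ) ^ n := by
        filter_upwards [Ioo_mem_nhdsLT_of_mem (by constructor <;> norm_num :
          (1:ℝ) ∈ Set.Ioc (-1 : ℝ) 1)] with r hr
        have hrz : ‖(r:ℂ) * z‖ < 1 := by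
          rw [norm_mul, hz1, mul_one, Complex.norm_real, Real.norm_eq_abs, abs_lt]
          exact ⟨hr.1, hr.2⟩
        have hs := Complex.hasSum_taylorSeries_log (z := -((r:ℂ) * z)) (by simpa using hrz)
        have hs' : HasSum (fun n : ℕ ↦ -(((r:ℂ) * z) ^ n / n)) (Complex.log (1 - r * z)) := by
          convert hs using 2 with n
          have hodd : ((-1:ℂ)) ^ (n + 1) * (-1:ℂ) ^ n = -1 := by
            rw [← pow_add]
            exact Odd.neg_one_pow ⟨n, by ring⟩
          rw [neg_pow (↑r * z) n]
          linear_combination (-((↑r * z) ^ n / (n:ℂ))) * hodd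
          ring
        rw [← hs'.neg.tsum_eq]
        congr 1 with n
        rw [mul_pow]
        ring
      refine Tendsto.congr' hev ?_
      have h1 : ContinuousAt (fun r : ℝ ↦ (1 : ℂ) - r * z) 1 := by fun_prop
      have h1v : (1:ℂ) - (1:ℝ) * z = 1 - z := by norm_num
      have hcont : ContinuousAt (fun r : ℝ ↦ -Complex.log (1 - r * z)) 1 := by
        apply ContinuousAt.neg
        have hlog : ContinuousAt Complex.log ((fun r : ℝ ↦ (1:ℂ) - r * z) 1) := by
          show ContinuousAt Complex.log ((1:ℂ) - (1:ℝ) * z)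
          rw [h1v]
          exact continuousAt_clog hslit
        exact ContinuousAt.comp (g := Complex.log) (f := fun r : ℝ ↦ (1:ℂ) - r * z) hlog h1
      have hmono := hcont.tendsto.mono_left (nhdsWithin_le_nhds (s := Set.Iio (1:ℝ)))
      rwa [h1v] at hmono
    exact tendsto_nhds_unique habel h2
  rw [hLeq] at hL
  -- Step 3: take real parts
  have hre2 := (Complex.continuous_re.tendsto _).comp hL
  have hre3 := hre2.comp (tendsto_add_atTop_nat 1)
  have hval : (-Complex.log (1 - z)).re = -Real.log (2 * Real.sin (π * x / (2 * c))) := by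
    rw [Complex.neg_re, Complex.log_re, habs]
    congr 2
    rw [hθdef]
    ring
  rw [hval] at hre3
  convert hre3 using 2 with N
  simp only [Function.comp]
  rw [Complex.re_sum, Finset.range_eq_Ico,
    Finset.sum_eq_sum_Ico_succ_bot (Nat.succ_pos N), Nat.succ_eq_add_one, Finset.Ico_add_one_right_eq_Icc]
  simp only [pow_zero, Nat.cast_zero, div_zero, Complex.zero_re, zero_add]
  apply Finset.sum_congr rfl
  intro i hi
  have hzi : z ^ i = Complex.exp ((i * θ : ℝ) * Complex.I) := by
    rw [hzdef, ← Complex.exp_nat_mul]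
    congr 1
    push_cast
    ring
  rw [hzi]
  have : ((i : ℂ)) = ((i : ℝ) : ℂ) := by push_cast; rfl
  rw [this, Complex.div_ofReal_re, Complex.exp_ofReal_mul_I_re]
  congr 2
  rw [hθdef]
  ring
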